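/- Suppose f is concave (and strictly decreasing, with intercepts L and M) and σ, τ > −1. Define C₁ = (1/2)(M − f((1 − σ⁻)L/(2 − σ⁻))) − σ⁻ M − τ⁻ L. Then for all s ≥ 1 and all r ≥ (1 − σ⁻)s/L, the counting function satisfies N(r, s) ≤ r² A − C₁ r s + σ⁻ τ⁻. -/

import Mathlib

open Set Filter Asymptotics MeasureTheory

noncomputable section

/-- The negative part `x⁻ = max(−x, 0)` of a real number. -/
def nneg (x : ℝ) : ℝ := max (-x) 0

/-- The shifted-lattice counting function `N(r,s)`: the number of points of the
shifted lattice `(ℕ+σ) × (ℕ+τ)` lying inside or on the curve `rΓ(s)`. -/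
def countN (f : ℝ → ℝ) (σ τ L r s : ℝ) : ℕ :=
  Set.ncard {p : ℤ × ℤ | 1 ≤ p.1 ∧ 1 ≤ p.2 ∧ ((p.1 : ℝ) + σ) * s / r ≤ L ∧
    (p.2 : ℝ) + τ ≤ r * s * f (((p.1 : ℝ) + σ) * s / r)}

/-- The set `S(r)` of stretch factors `s > 0` maximizing `s ↦ N(r,s)`. -/
def maximizers (f : ℝ → ℝ) (σ τ L r : ℝ) : Set ℝ :=
  {s | 0 < s ∧ ∀ s' > 0, countN f σ τ L r s' ≤ countN f σ τ L r s}

/-- Trapezoid rule lower bound for concave functions. -/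
lemma trapezoid {L : ℝ} {f : ℝ → ℝ} (hL : 0 < L)
    (hfc : ContinuousOn f (Icc 0 L)) (hconc : ConcaveOn ℝ (Icc 0 L) f)
    {c d : ℝ} (hc : c ∈ Icc 0 L) (hd : d ∈ Icc 0 L) (hcd : c ≤ d) :
    (d - c) * (f c + f d) / 2 ≤ ∫ x in c..d, f x := by
  rcases eq_or_lt_of_le hcd with rfl | hlt
  · simp
  set g : ℝ → ℝ := fun x => ((d - x) * f c + (x - c) * f d) / (d - c) with hg
  have hdc : (0:ℝ) < d - c := by linarith
  have hptw : ∀ x ∈ Icc c d, g x ≤ f x := by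
    intro x hx
    have h1 : (0:ℝ) ≤ (d - x) / (d - c) := by
      apply div_nonneg <;> [linarith [hx.2]; linarith]
    have h2 : (0:ℝ) ≤ (x - c) / (d - c) := by
      apply div_nonneg <;> [linarith [hx.1]; linarith]
    have h3 : (d - x) / (d - c) + (x - c) / (d - c) = 1 := by field_simp; ring
    have := hconc.2 hc hd h1 h2 h3
    simp only [smul_eq_mul] at this
    have hxeq : (d - x) / (d - c) * c + (x - c) / (d - c) * d = x := by field_simp; ring
    rw [hxeq] at this
    calc g x = (d - x) / (d - c) * f c + (x - c) / (d - c) * f d := by rw [hg]; ring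
    _ ≤ f x := this
  have hgint : IntervalIntegrable g MeasureTheory.volume c d := by
    apply Continuous.intervalIntegrable; fun_prop
  have hfint : IntervalIntegrable f MeasureTheory.volume c d := by
    apply ContinuousOn.intervalIntegrable
    exact hfc.mono (uIcc_subset_Icc hc hd)
  have hmono := intervalIntegral.integral_mono_on hcd hgint hfint hptw
  have hgval : ∫ x in c..d, g x = (d - c) * (f c + f d) / 2 := by
    have : ∫ x in c..d, g x = ∫ x in c..d, ((d - x) * f c + (x - c) * f d) / (d - c) := rfl
    rw [this]
    rw [intervalIntegral.integral_div]
    have : ∫ x in c..d, ((d - x) * f c + (x - c) * f d)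
        = ∫ x in c..d, ((d * f c - c * f d) + x * (f d - f c)) := by
      congr 1; ext x; ring
    rw [this]
    rw [intervalIntegral.integral_add (by apply Continuous.intervalIntegrable; fun_prop)
      (by apply Continuous.intervalIntegrable; fun_prop)]
    rw [intervalIntegral.integral_const]
    rw [intervalIntegral.integral_mul_const, integral_id]
    simp only [smul_eq_mul]
    field_simp
    ring
  linarith [hmono, hgval.symm.le]

lemma basic_facts {L M : ℝ} {f : ℝ → ℝ} (hL : 0 < L) (hM : 0 < M)
    (hfa : StrictAntiOn f (Icc 0 L)) (hf0 : f 0 = M) (hfL : f L = 0) :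
    ∀ x ∈ Icc 0 L, 0 ≤ f x ∧ f x ≤ M := by
  intro x hx
  have h0 : (0:ℝ) ∈ Icc (0:ℝ) L := ⟨le_refl _, hL.le⟩
  have hLm : L ∈ Icc (0:ℝ) L := ⟨hL.le, le_refl _⟩
  constructor
  · have := hfa.antitoneOn hx hLm hx.2
    rw [hfL] at this; exact this
  · have := hfa.antitoneOn h0 hx hx.1
    rw [hf0] at this; exact this

lemma sum_bound {L M σ : ℝ} {f : ℝ → ℝ} (hL : 0 < L) (hM : 0 < M)
    (hfc : ContinuousOn f (Icc 0 L)) (hfa : StrictAntiOn f (Icc 0 L))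
    (hf0 : f 0 = M) (hfL : f L = 0) (hconc : ConcaveOn ℝ (Icc 0 L) f)
    (hσ : -1 < σ) {h : ℝ} (hh : 0 < h) :
    ∀ n : ℤ, 1 ≤ n → ((n:ℝ) + σ) * h ≤ L →
      ∑ j ∈ Finset.Icc (1:ℤ) n, h * f (((j:ℝ) + σ) * h) ≤
        (∫ x in (0:ℝ)..(((n:ℝ) + σ) * h), f x) - h / 2 * (M - f (((n:ℝ) + σ) * h))
          + nneg σ * h * M := by
  have ha0 : 0 ≤ nneg σ := le_max_right _ _
  have haσ : -σ ≤ nneg σ := le_max_left _ _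
  have key1 : ∀ c ∈ Icc (0:ℝ) L, 0 ≤ f c ∧ f c ≤ M := basic_facts hL hM hfa hf0 hfL
  refine Int.le_induction ?_ ?_
  · -- base case n = 1
    intro hx1L
    have hx1pos : 0 < ((1:ℤ):ℝ) + σ := by push_cast; linarith
    have hx1 : (((1:ℤ):ℝ) + σ) * h ∈ Icc (0:ℝ) L := ⟨by positivity, hx1L⟩
    have htrap := trapezoid hL hfc hconc (c := 0) (d := (((1:ℤ):ℝ) + σ) * h)
      ⟨le_refl _, hL.le⟩ hx1 hx1.1
    rw [hf0] at htrap
    simp only [Finset.Icc_self, Finset.sum_singleton]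
    obtain ⟨hg0, hgM⟩ := key1 _ hx1
    set g1 := f ((((1:ℤ):ℝ) + σ) * h)
    have hsub : (h - (((1:ℤ):ℝ) + σ) * h) * (M + g1) / 2 ≤ nneg σ * h * M := by
      push_cast
      have h1 : h - (1 + σ) * h = (-σ) * h := by ring
      rw [h1]
      rcases le_or_gt (-σ) 0 with hc | hc
      · have h2 : (-σ) * h * (M + g1) / 2 ≤ 0 := by
          apply div_nonpos_of_nonpos_of_nonneg _ (by norm_num)
          exact mul_nonpos_of_nonpos_of_nonneg
            (mul_nonpos_of_nonpos_of_nonneg hc hh.le) (by linarith)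
        have h4 : 0 ≤ nneg σ * h * M := by positivity
        linarith
      · have hMg : (M + g1) / 2 ≤ M := by linarith
        have e1 : (-σ) * h * (M + g1) / 2 = ((-σ) * h) * ((M + g1)/2) := by ring
        rw [e1]
        apply mul_le_mul (by nlinarith) hMg (by linarith) (by positivity)
    have h3 : ((((1:ℤ):ℝ) + σ) * h - 0) * (M + g1) / 2
        = (((1:ℤ):ℝ) + σ) * h * (M + g1) / 2 := by ring
    rw [h3] at htrap
    linarith
  · -- inductive step
    intro n hn ih hxL
    push_cast at hxL ⊢
    have hn1 : (1:ℝ) ≤ (n:ℝ) := by exact_mod_cast hn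
    have hxnL : ((n:ℝ) + σ) * h ≤ L := by nlinarith
    have hxnpos : 0 < (n:ℝ) + σ := by linarith
    have hxn : ((n:ℝ) + σ) * h ∈ Icc (0:ℝ) L := ⟨by positivity, hxnL⟩
    have hxn1m : ((n:ℝ) + 1 + σ) * h ∈ Icc (0:ℝ) L := ⟨mul_nonneg (by linarith) hh.le, hxL⟩
    have hle : ((n:ℝ) + σ) * h ≤ ((n:ℝ) + 1 + σ) * h := by nlinarith
    have htrap := trapezoid hL hfc hconc hxn hxn1m hle
    have hdiff : (((n:ℝ) + 1 + σ) * h - ((n:ℝ) + σ) * h) = h := by ring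
    rw [hdiff] at htrap
    have hins : Finset.Icc (1:ℤ) (n+1) = insert (n+1) (Finset.Icc 1 n) := by
      ext j; simp only [Finset.mem_Icc, Finset.mem_insert]; omega
    rw [hins, Finset.sum_insert (by simp)]
    have hint1 : IntervalIntegrable f MeasureTheory.volume 0 (((n:ℝ) + σ) * h) :=
      (hfc.mono (uIcc_subset_Icc ⟨le_refl _, hL.le⟩ hxn)).intervalIntegrable
    have hint2 : IntervalIntegrable f MeasureTheory.volume (((n:ℝ) + σ) * h)
        (((n:ℝ) + 1 + σ) * h) :=
      (hfc.mono (uIcc_subset_Icc hxn hxn1m)).intervalIntegrable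
    have hadd := intervalIntegral.integral_add_adjacent_intervals hint1 hint2
    have ih' := ih hxnL
    push_cast
    linarith


set_option maxHeartbeats 1600000 in
/-- Two-term upper bound on the counting function for concave curves:
`N(r,s) ≤ r² Area(Γ) − C₁ r s + σ⁻ τ⁻` for all `s ≥ 1` and `r ≥ (1−σ⁻)s/L`, where
`C₁ = ½(M − f((1−σ⁻)L/(2−σ⁻))) − σ⁻ M − τ⁻ L`. -/
theorem counting_upper_bound_concave (L M σ τ : ℝ) (f : ℝ → ℝ)
    (hL : 0 < L) (hM : 0 < M)
    (hfc : ContinuousOn f (Icc 0 L)) (hfa : StrictAntiOn f (Icc 0 L))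
    (hf0 : f 0 = M) (hfL : f L = 0)
    (hconc : ConcaveOn ℝ (Icc 0 L) f)
    (hσ : -1 < σ) (hτ : -1 < τ) :
    ∀ s ≥ (1 : ℝ), ∀ r ≥ (1 - nneg σ) * s / L,
      (countN f σ τ L r s : ℝ) ≤
        r ^ 2 * (∫ x in (0 : ℝ)..L, f x)
          - (1 / 2 * (M - f ((1 - nneg σ) * L / (2 - nneg σ))) - nneg σ * M - nneg τ * L) * r * s
          + nneg σ * nneg τ := by
  intro s hs r hr
  set a := nneg σ with ha
  set b := nneg τ with hb
  have ha0 : 0 ≤ a := le_max_right _ _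
  have haσ : -σ ≤ a := le_max_left _ _
  have ha1 : a < 1 := by rw [ha]; simp only [nneg]; apply max_lt (by linarith) one_pos
  have hb0 : 0 ≤ b := le_max_right _ _
  have hbτ : -τ ≤ b := le_max_left _ _
  have hb1 : b < 1 := by rw [hb]; simp only [nneg]; apply max_lt (by linarith) one_pos
  have hs0 : (0:ℝ) < s := by linarith
  have hr0 : (0:ℝ) < r :=
    lt_of_lt_of_le (div_pos (mul_pos (by linarith : (0:ℝ) < 1 - a) hs0) hL) hr
  have hh : (0:ℝ) < s / r := by positivity
  have key1 : ∀ c ∈ Icc (0:ℝ) L, 0 ≤ f c ∧ f c ≤ M := basic_facts hL hM hfa hf0 hfL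
  set A := ∫ x in (0:ℝ)..L, f x with hA
  -- area lower bound
  have hAlow : L * M / 2 ≤ A := by
    have := trapezoid hL hfc hconc (c := 0) (d := L) ⟨le_refl _, hL.le⟩ ⟨hL.le, le_refl _⟩ hL.le
    rw [hf0, hfL] at this
    calc L * M / 2 = (L - 0) * (M + 0) / 2 := by ring
    _ ≤ A := this
  -- x* facts
  set xs := (1 - a) * L / (2 - a) with hxs
  have hxsmem : xs ∈ Icc (0:ℝ) L := by
    constructor
    · apply div_nonneg (by nlinarith) (by linarith)
    · rw [hxs, div_le_iff₀ (by linarith)]; nlinarith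
  have hFs0 : 0 ≤ f xs := (key1 _ hxsmem).1
  have hFsM : f xs ≤ M := (key1 _ hxsmem).2
  set J : ℤ := ⌊L * r / s - σ⌋ with hJ
  set K : ℤ → ℤ := fun j => ⌊r * s * f (((j:ℝ) + σ) * s / r) - τ⌋ with hK
  -- every j in range has x_j in (0, L]
  have hxjmem : ∀ j : ℤ, 1 ≤ j → j ≤ J → ((j:ℝ) + σ) * s / r ∈ Icc (0:ℝ) L := by
    intro j h1 h2
    have hj1 : (1:ℝ) ≤ (j:ℝ) := by exact_mod_cast h1
    constructor
    · apply div_nonneg (mul_nonneg (by linarith) hs0.le) hr0.le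
    · have hjJ : (j:ℝ) ≤ L * r / s - σ := by
        calc (j:ℝ) ≤ (J:ℝ) := by exact_mod_cast h2
        _ ≤ L * r / s - σ := Int.floor_le _
      rw [div_le_iff₀ hr0]
      calc ((j:ℝ) + σ) * s ≤ (L * r / s) * s := by nlinarith
      _ = L * r := by field_simp
  -- counting bound
  have hcount : (countN f σ τ L r s : ℝ) ≤
      ∑ j ∈ Finset.Icc (1:ℤ) J, (r * s * f (((j:ℝ) + σ) * s / r) + b) := by
    classical
    set B : Finset (ℤ × ℤ) :=
      (Finset.Icc (1:ℤ) J).biUnion (fun j => ({j} : Finset ℤ) ×ˢ Finset.Icc 1 (K j)) with hB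
    have hsub : {p : ℤ × ℤ | 1 ≤ p.1 ∧ 1 ≤ p.2 ∧ ((p.1 : ℝ) + σ) * s / r ≤ L ∧
        (p.2 : ℝ) + τ ≤ r * s * f (((p.1 : ℝ) + σ) * s / r)} ⊆ ↑B := by
      rintro ⟨j, k⟩ ⟨h1, h2, h3, h4⟩
      simp only [hB, Finset.coe_biUnion, Finset.mem_coe, Finset.mem_Icc, mem_iUnion,
        Finset.mem_product, Finset.mem_singleton]
      refine ⟨j, ⟨h1, ?_⟩, rfl, h2, ?_⟩
      · rw [hJ]
        apply Int.le_floor.mpr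
        have : ((j:ℝ) + σ) * s ≤ L * r := by
          rw [div_le_iff₀ hr0] at h3; exact h3
        have h5 : (j:ℝ) + σ ≤ L * r / s := by
          rw [le_div_iff₀ hs0]; exact this
        linarith
      · exact Int.le_floor.mpr (by push_cast; linarith)
    have h6 : (countN f σ τ L r s : ℕ) ≤ B.card := by
      rw [countN]
      calc _ ≤ (↑B : Set (ℤ × ℤ)).ncard := Set.ncard_le_ncard hsub B.finite_toSet
      _ = B.card := Set.ncard_coe_finset B
    have h7 : B.card ≤ ∑ j ∈ Finset.Icc (1:ℤ) J, (K j).toNat := by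
      calc B.card ≤ ∑ j ∈ Finset.Icc (1:ℤ) J, (({j} : Finset ℤ) ×ˢ Finset.Icc 1 (K j)).card :=
        Finset.card_biUnion_le
      _ = ∑ j ∈ Finset.Icc (1:ℤ) J, (K j).toNat := by
        apply Finset.sum_congr rfl
        intro j _
        rw [Finset.card_product, Finset.card_singleton, one_mul, Int.card_Icc]
        congr 1; ring
    have h9 : (countN f σ τ L r s : ℝ) ≤ ∑ j ∈ Finset.Icc (1:ℤ) J, (((K j).toNat : ℝ)) := by
      have := le_trans h6 h7
      calc (countN f σ τ L r s : ℝ) ≤ ((∑ j ∈ Finset.Icc (1:ℤ) J, (K j).toNat : ℕ) : ℝ) := by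
            exact_mod_cast this
        _ = ∑ j ∈ Finset.Icc (1:ℤ) J, (((K j).toNat : ℝ)) := Nat.cast_sum _ _
    refine le_trans h9 (Finset.sum_le_sum ?_)
    intro j hj
    rw [Finset.mem_Icc] at hj
    have hmem := hxjmem j hj.1 hj.2
    have hf0j := (key1 _ hmem).1
    have h8 : ((K j).toNat : ℝ) = max ((K j : ℝ)) 0 := by
      exact_mod_cast congrArg (fun z : ℤ => (z : ℝ)) (Int.toNat_eq_max (K j))
    rw [h8]
    apply max_le
    · have := Int.floor_le (r * s * f (((j:ℝ) + σ) * s / r) - τ)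
      calc ((K j : ℝ)) ≤ r * s * f (((j:ℝ) + σ) * s / r) - τ := this
        _ ≤ r * s * f (((j:ℝ) + σ) * s / r) + b := by linarith
    · positivity
  have hJle : (J:ℝ) ≤ L * r / s - σ := by rw [hJ]; exact Int.floor_le _
  have hJlt : L * r / s - σ < (J:ℝ) + 1 := by rw [hJ]; exact Int.lt_floor_add_one _
  clear hK
  clear K
  clear hJ
  clear_value J
  rcases lt_or_ge J 1 with hJ1 | hJ1
  · -- empty range: N = 0 and RHS ≥ 0
    have hempty : Finset.Icc (1:ℤ) J = ∅ := Finset.Icc_eq_empty (by omega)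
    rw [hempty, Finset.sum_empty] at hcount
    have hRHS : 0 ≤ r ^ 2 * A - (1 / 2 * (M - f xs) - a * M - b * L) * r * s + a * b := by
      have hA0 : 0 ≤ A := le_trans (by positivity) hAlow
      have h1 : r * ((1 - a) * s / L) * A ≤ r ^ 2 * A := by
        apply mul_le_mul_of_nonneg_right _ hA0
        have h0 := mul_le_mul_of_nonneg_left hr hr0.le
        rw [pow_two]; linarith
      have h2 : r * s * ((1 - a) * M / 2) ≤ r * ((1 - a) * s / L) * A := by
        have e : r * ((1 - a) * s / L) * (L * M / 2) = r * s * ((1 - a) * M / 2) := by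
          field_simp
        calc r * s * ((1 - a) * M / 2) = r * ((1 - a) * s / L) * (L * M / 2) := e.symm
          _ ≤ r * ((1 - a) * s / L) * A := by
              apply mul_le_mul_of_nonneg_left hAlow
              exact mul_nonneg hr0.le (le_of_lt (div_pos (mul_pos (by linarith) hs0) hL))
      have hc : 1 / 2 * (M - f xs) - a * M - b * L ≤ (1 - a) * M / 2 := by
        have := mul_nonneg ha0 hM.le
        have := mul_nonneg hb0 hL.le
        linarith
      have h3 := mul_le_mul_of_nonneg_right hc (mul_pos hr0 hs0).le
      have h4 := mul_nonneg ha0 hb0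
      nlinarith [h1, h2, h3, h4]
    linarith
  · -- main case
    have hJr : (1:ℝ) ≤ (J:ℝ) := by exact_mod_cast hJ1
    have hxJmem := hxjmem J hJ1 (le_refl _)
    have hxJL : ((J:ℝ) + σ) * (s / r) ≤ L := by
      rw [← mul_div_assoc]; exact hxJmem.2
    have hsum := sum_bound hL hM hfc hfa hf0 hfL hconc hσ hh J hJ1 hxJL
    simp only [← mul_div_assoc] at hsum
    rw [← ha] at hsum
    -- x_J ≥ xs
    have hup : L < ((J:ℝ) + 1 + σ) * s / r := by
      have h2 : L * r / s < (J:ℝ) + 1 + σ := by linarith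
      rw [lt_div_iff₀ hr0]
      calc L * r = (L * r / s) * s := by field_simp
        _ < ((J:ℝ) + 1 + σ) * s := mul_lt_mul_of_pos_right h2 hs0
    have hxsle : xs ≤ ((J:ℝ) + σ) * s / r := by
      have h1 : (1 - a) * (s / r) ≤ ((J:ℝ) + σ) * s / r := by
        rw [mul_div_assoc]
        apply mul_le_mul_of_nonneg_right _ hh.le
        linarith
      have h2 : L - ((J:ℝ) + σ) * s / r < s / r := by
        have h3 : ((J:ℝ) + 1 + σ) * s / r = ((J:ℝ) + σ) * s / r + s / r := by ring
        have h4 := hup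
        rw [h3] at h4
        linarith
      -- (2 - a) * xJ > (1 - a) * L
      set xJ := ((J:ℝ) + σ) * s / r
      have h3 : (1 - a) * (L - xJ) ≤ (1 - a) * (s / r) := by nlinarith
      have h4 : (1 - a) * L ≤ (2 - a) * xJ := by nlinarith
      rw [hxs, div_le_iff₀ (by linarith)]
      nlinarith
    have hfJle : f (((J:ℝ) + σ) * s / r) ≤ f xs :=
      hfa.antitoneOn hxsmem hxJmem hxsle
    -- integral bound
    have hIle : (∫ x in (0:ℝ)..(((J:ℝ) + σ) * s / r), f x) ≤ A := by
      have hint1 : IntervalIntegrable f MeasureTheory.volume 0 (((J:ℝ) + σ) * s / r) :=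
        (hfc.mono (uIcc_subset_Icc ⟨le_refl _, hL.le⟩ hxJmem)).intervalIntegrable
      have hint2 : IntervalIntegrable f MeasureTheory.volume (((J:ℝ) + σ) * s / r) L :=
        (hfc.mono (uIcc_subset_Icc hxJmem ⟨hL.le, le_refl _⟩)).intervalIntegrable
      have hadd := intervalIntegral.integral_add_adjacent_intervals hint1 hint2
      have hnn : 0 ≤ ∫ x in (((J:ℝ) + σ) * s / r)..L, f x := by
        apply intervalIntegral.integral_nonneg hxJmem.2
        intro u hu
        exact (key1 u ⟨le_trans hxJmem.1 hu.1, hu.2⟩).1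
      rw [hA]; linarith
    -- sum of areas
    have hsum2 : ∑ j ∈ Finset.Icc (1:ℤ) J, (r * s * f (((j:ℝ) + σ) * s / r)) ≤
        r ^ 2 * A - r * s / 2 * (M - f xs) + a * (r * s) * M := by
      have hmul := mul_le_mul_of_nonneg_left hsum (sq_nonneg r)
      have hlhs : r ^ 2 * ∑ j ∈ Finset.Icc (1:ℤ) J, (s / r * f (((j:ℝ) + σ) * s / r)) =
          ∑ j ∈ Finset.Icc (1:ℤ) J, (r * s * f (((j:ℝ) + σ) * s / r)) := by
        rw [Finset.mul_sum]
        apply Finset.sum_congr rfl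
        intro j _
        field_simp
      rw [hlhs] at hmul
      have hrhs : r ^ 2 * ((∫ x in (0:ℝ)..(((J:ℝ) + σ) * s / r), f x)
            - s / r / 2 * (M - f (((J:ℝ) + σ) * s / r)) + a * s / r * M) =
          r ^ 2 * (∫ x in (0:ℝ)..(((J:ℝ) + σ) * s / r), f x)
            - r * s / 2 * (M - f (((J:ℝ) + σ) * s / r)) + a * (r * s) * M := by
        field_simp
      rw [hrhs] at hmul
      have h1 : r ^ 2 * (∫ x in (0:ℝ)..(((J:ℝ) + σ) * s / r), f x) ≤ r ^ 2 * A :=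
        mul_le_mul_of_nonneg_left hIle (sq_nonneg r)
      have h2 : - (r * s / 2 * (M - f (((J:ℝ) + σ) * s / r))) ≤ - (r * s / 2 * (M - f xs)) := by
        have : 0 ≤ r * s / 2 := by positivity
        nlinarith
      linarith
    -- cardinality bound
    have hcard : ((Finset.Icc (1:ℤ) J).card : ℝ) ≤ L * r / s + a := by
      rw [Int.card_Icc]
      have h1 : (J + 1 - 1).toNat = J.toNat := by congr 1; ring
      rw [h1]
      have h2 : ((J.toNat : ℤ) : ℝ) = max ((J:ℝ)) 0 := by
        exact_mod_cast congrArg (fun z : ℤ => (z : ℝ)) (Int.toNat_eq_max J)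
      push_cast at h2 ⊢
      rw [h2]
      apply max_le
      · linarith
      · positivity
    -- combine
    have hsplit : ∑ j ∈ Finset.Icc (1:ℤ) J, (r * s * f (((j:ℝ) + σ) * s / r) + b) =
        (∑ j ∈ Finset.Icc (1:ℤ) J, (r * s * f (((j:ℝ) + σ) * s / r)))
          + b * ((Finset.Icc (1:ℤ) J).card : ℝ) := by
      rw [Finset.sum_add_distrib, Finset.sum_const, nsmul_eq_mul]
      ring
    have hbcard : b * ((Finset.Icc (1:ℤ) J).card : ℝ) ≤ b * L * (r * s) + a * b := by
      have h1 : b * ((Finset.Icc (1:ℤ) J).card : ℝ) ≤ b * (L * r / s + a) :=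
        mul_le_mul_of_nonneg_left hcard hb0
      have h2 : L * r / s ≤ L * r * s := by
        rw [div_le_iff₀ hs0]
        nlinarith [mul_pos hL hr0, mul_le_mul hs hs (by linarith : (0:ℝ) ≤ 1) (by linarith : (0:ℝ) ≤ s)]
      have h3 := mul_le_mul_of_nonneg_left h2 hb0
      nlinarith [h1, h3]
    rw [hsplit] at hcount
    calc (countN f σ τ L r s : ℝ) ≤
        (r ^ 2 * A - r * s / 2 * (M - f xs) + a * (r * s) * M) + (b * L * (r * s) + a * b) := by
          linarith
    _ = r ^ 2 * A - (1 / 2 * (M - f xs) - a * M - b * L) * r * s + a * b := by ring
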